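/- In the formal calculus of delta functions, the identity x₁⁻¹δ((x₀ - y₁)/x₁) · x₂⁻¹δ((x₀ - y₂)/x₂) = x₂⁻¹δ((x₀ - y₂)/x₂) · x₁⁻¹δ((x₂ - (y₁ - y₂))/x₁) holds in ℂ[y₁, y₂]((x₀⁻¹))[[x₁, x₁⁻¹, x₂, x₂⁻¹]], where (x₀ - y)ⁿ is expanded in nonnegative powers of y and (x₂ - (y₁-y₂))ⁿ in nonnegative powers of y₁ - y₂ (i.e., of y₁ and y₂). -/

import Mathlib

/-- Generalized binomial coefficient `C(m, j)` for `m ∈ ℤ`, `j ∈ ℕ`, as a complex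
number: `m(m-1)⋯(m-j+1)/j!`. -/
noncomputable def genChoose (m : ℤ) (j : ℕ) : ℂ :=
  (∏ i ∈ Finset.range j, ((m : ℂ) - (i : ℂ))) / (Nat.factorial j : ℂ)

/-- Coefficient of `x₀^e₀ x₁^e₁ x₂^e₂ y₁^j₁ y₂^j₂` in the formal product
`x₁⁻¹δ((x₀ - y₁)/x₁) · x₂⁻¹δ((x₀ - y₂)/x₂)`, where
`x⁻¹δ((u - y)/x) = ∑_{n ∈ ℤ} (u - y)^n x^{-n-1}` and `(u - y)^n` is expanded in
nonnegative powers of `y`. -/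
noncomputable def lhsDeltaCoeff (e₀ e₁ e₂ : ℤ) (j₁ j₂ : ℕ) : ℂ :=
  if e₀ = (-e₁ - 1 - (j₁ : ℤ)) + (-e₂ - 1 - (j₂ : ℤ)) then
    genChoose (-e₁ - 1) j₁ * (-1) ^ j₁ * genChoose (-e₂ - 1) j₂ * (-1) ^ j₂
  else 0

/-- Coefficient of `x₀^a x₂^b y₂^c` in `x₂⁻¹δ((x₀ - y₂)/x₂)`. -/
noncomputable def deltaCoeffA (a b : ℤ) (c : ℕ) : ℂ :=
  if a = -b - 1 - (c : ℤ) then genChoose (-b - 1) c * (-1) ^ c else 0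

/-- Coefficient of `x₁^d x₂^e y₁^f y₂^g` in `x₁⁻¹δ((x₂ - (y₁ - y₂))/x₁)`, where
`(x₂ - (y₁ - y₂))^m` is expanded in nonnegative powers of `y₁ - y₂` (hence of
`y₁` and `y₂`). -/
noncomputable def deltaCoeffB (d e : ℤ) (f g : ℕ) : ℂ :=
  if e = -d - 1 - ((f + g : ℕ) : ℤ) then
    genChoose (-d - 1) (f + g) * (-1) ^ (f + g) * (Nat.choose (f + g) g : ℂ) * (-1) ^ g
  else 0

/-- Coefficient of `x₀^e₀ x₁^e₁ x₂^e₂ y₁^j₁ y₂^j₂` in the formal product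
`x₂⁻¹δ((x₀ - y₂)/x₂) · x₁⁻¹δ((x₂ - (y₁ - y₂))/x₁)`, obtained by summing over the
splittings of the `x₂`- and `y₂`-exponents between the two factors. -/
noncomputable def rhsDeltaCoeff (e₀ e₁ e₂ : ℤ) (j₁ j₂ : ℕ) : ℂ :=
  ∑' b : ℤ, ∑ c ∈ Finset.range (j₂ + 1),
    deltaCoeffA e₀ b c * deltaCoeffB e₁ (e₂ - b) j₁ (j₂ - c)


open Finset Polynomial

lemma descPoch_prod (r : ℂ) (n : ℕ) :
    (descPochhammer ℤ n).smeval r = ∏ i ∈ Finset.range n, (r - (i : ℂ)) := by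
  induction n with
  | zero => simp [descPochhammer]
  | succ n ih =>
    rw [descPochhammer_succ_right, smeval_mul, ih, prod_range_succ]
    congr 1
    simp [smeval_sub, smeval_X, smeval_natCast]

lemma ringChoose_eq_div (r : ℂ) (n : ℕ) :
    Ring.choose r n = (∏ i ∈ Finset.range n, (r - (i : ℂ))) / (Nat.factorial n : ℂ) := by
  have h := Ring.descPochhammer_eq_factorial_smul_choose (R := ℂ) r n
  rw [descPoch_prod] at h
  rw [eq_div_iff (by exact_mod_cast Nat.factorial_ne_zero n), mul_comm, ← nsmul_eq_mul, ← h]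

lemma genChoose_eq (m : ℤ) (j : ℕ) : genChoose m j = Ring.choose ((m : ℤ) : ℂ) j := by
  rw [genChoose, ringChoose_eq_div]

lemma ringChoose_neg (r : ℂ) (k : ℕ) :
    Ring.choose (-r - 1) k = (-1) ^ k * Ring.choose (r + k) k := by
  rw [ringChoose_eq_div, ringChoose_eq_div]
  have h1 : ∏ i ∈ Finset.range k, ((-r - 1) - (i : ℂ))
      = (-1) ^ k * ∏ i ∈ Finset.range k, (r + 1 + (i : ℂ)) := by
    calc ∏ i ∈ Finset.range k, ((-r - 1) - (i : ℂ))
        = ∏ i ∈ Finset.range k, ((-1) * (r + 1 + (i : ℂ))) :=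
          prod_congr rfl fun i _ => by ring
      _ = (∏ _i ∈ Finset.range k, (-1 : ℂ)) * ∏ i ∈ Finset.range k, (r + 1 + (i : ℂ)) :=
          prod_mul_distrib
      _ = (-1) ^ k * ∏ i ∈ Finset.range k, (r + 1 + (i : ℂ)) := by
          rw [prod_const, card_range]
  have h2 : ∏ i ∈ Finset.range k, ((r + (k : ℂ)) - (i : ℂ))
      = ∏ i ∈ Finset.range k, (r + 1 + (i : ℂ)) := by
    rw [← Finset.prod_range_reflect (fun i => (r + 1 + (i : ℂ))) k]
    refine prod_congr rfl fun j hj => ?_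
    have hj' : j < k := mem_range.mp hj
    have : (k - 1 - j : ℕ) = k - (j + 1) := by omega
    rw [this, Nat.cast_sub (by omega)]
    push_cast
    ring
  rw [h1, h2, mul_div_assoc]

lemma key (m p : ℂ) (j₁ j₂ : ℕ) :
    ∑ c ∈ Finset.range (j₂ + 1),
      (Ring.choose (m + p - (j₁ : ℂ) - (j₂ : ℂ) + (c : ℂ)) c * (-1) ^ c) *
      (Ring.choose m (j₁ + (j₂ - c)) * (-1) ^ (j₁ + (j₂ - c)) *
        ((j₁ + (j₂ - c)).choose (j₂ - c) : ℂ) * (-1) ^ (j₂ - c))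
    = Ring.choose m j₁ * (-1) ^ j₁ * Ring.choose p j₂ * (-1) ^ j₂ := by
  set q : ℂ := m + p - (j₁ : ℂ) - (j₂ : ℂ) with hq
  have hterm : ∀ c ∈ Finset.range (j₂ + 1),
      (Ring.choose (q + (c : ℂ)) c * (-1) ^ c) *
      (Ring.choose m (j₁ + (j₂ - c)) * (-1) ^ (j₁ + (j₂ - c)) *
        ((j₁ + (j₂ - c)).choose (j₂ - c) : ℂ) * (-1) ^ (j₂ - c))
      = ((-1 : ℂ) ^ j₁ * Ring.choose m j₁) *
        (Ring.choose (-q - 1) c * Ring.choose (m - (j₁ : ℂ)) (j₂ - c)) := by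
    intro c hc
    set d := j₂ - c with hd
    have hA : Ring.choose (q + (c : ℂ)) c * (-1) ^ c = Ring.choose (-q - 1) c := by
      rw [ringChoose_neg]; ring
    rw [hA]
    have hsym : (j₁ + d).choose d = (j₁ + d).choose j₁ := by
      have h := Nat.choose_symm (Nat.le_add_right j₁ d)
      rwa [Nat.add_sub_cancel_left] at h
    have htri := Ring.choose_smul_choose m (n := j₁ + d) (k := j₁) (Nat.le_add_right _ _)
    rw [Nat.add_sub_cancel_left, nsmul_eq_mul] at htri
    have hD : ((-1 : ℂ)) ^ d * (-1) ^ d = 1 := by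
      rw [← pow_add]; exact Even.neg_one_pow ⟨d, rfl⟩
    rw [hsym]
    linear_combination ((-1 : ℂ) ^ (j₁ + d) * (-1) ^ d * Ring.choose (-q - 1) c) * htri
      + ((-1 : ℂ) ^ j₁ * Ring.choose m j₁ * Ring.choose (m - (j₁ : ℂ)) d *
          Ring.choose (-q - 1) c) * hD
  rw [Finset.sum_congr rfl hterm, ← Finset.mul_sum]
  have hvdm := Ring.add_choose_eq (R := ℂ) (r := -q - 1) (s := m - (j₁ : ℂ)) j₂ (Commute.all _ _)
  rw [Finset.Nat.sum_antidiagonal_eq_sum_range_succ_mk] at hvdm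
  rw [← hvdm]
  have harg : (-q - 1) + (m - (j₁ : ℂ)) = -(p - (j₂ : ℂ)) - 1 := by rw [hq]; ring
  rw [harg, ringChoose_neg (p - (j₂ : ℂ)) j₂,
    show (p - (j₂ : ℂ) + (j₂ : ℂ)) = p by ring]
  ring

/-- the formal delta-function identity
`x₁⁻¹δ((x₀-y₁)/x₁) x₂⁻¹δ((x₀-y₂)/x₂) = x₂⁻¹δ((x₀-y₂)/x₂) x₁⁻¹δ((x₂-(y₁-y₂))/x₁)`
in `ℂ[y₁,y₂]((x₀⁻¹))[[x₁^{±1}, x₂^{±1}]]`, stated coefficientwise. -/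
theorem stmt_9 (e₀ e₁ e₂ : ℤ) (j₁ j₂ : ℕ) :
    lhsDeltaCoeff e₀ e₁ e₂ j₁ j₂ = rhsDeltaCoeff e₀ e₁ e₂ j₁ j₂ := by
  have hzero : ∀ c : ℕ, ∀ b : ℤ, b ≠ -e₀ - 1 - (c : ℤ) →
      deltaCoeffA e₀ b c * deltaCoeffB e₁ (e₂ - b) j₁ (j₂ - c) = 0 := by
    intro c b hb
    rw [deltaCoeffA, if_neg (by omega), zero_mul]
  have hsum : rhsDeltaCoeff e₀ e₁ e₂ j₁ j₂
      = ∑ c ∈ Finset.range (j₂ + 1),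
          deltaCoeffA e₀ (-e₀ - 1 - (c : ℤ)) c *
            deltaCoeffB e₁ (e₂ - (-e₀ - 1 - (c : ℤ))) j₁ (j₂ - c) := by
    rw [rhsDeltaCoeff,
      Summable.tsum_finsetSum (f := fun c b => deltaCoeffA e₀ b c * deltaCoeffB e₁ (e₂ - b) j₁ (j₂ - c))
        (fun c _ => summable_of_ne_finset_zero (s := {-e₀ - 1 - (c : ℤ)})
          (fun b hb => hzero c b (by simpa using hb)))]
    exact Finset.sum_congr rfl fun c _ =>
      tsum_eq_single (-e₀ - 1 - (c : ℤ)) (fun b hb => hzero c b hb)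
  by_cases h : e₀ = (-e₁ - 1 - (j₁ : ℤ)) + (-e₂ - 1 - (j₂ : ℤ))
  · rw [hsum, lhsDeltaCoeff, if_pos h]
    have hB : ∀ c ∈ Finset.range (j₂ + 1),
        deltaCoeffA e₀ (-e₀ - 1 - (c : ℤ)) c *
          deltaCoeffB e₁ (e₂ - (-e₀ - 1 - (c : ℤ))) j₁ (j₂ - c)
        = (Ring.choose (((-e₁ - 1 : ℤ) : ℂ) + ((-e₂ - 1 : ℤ) : ℂ) - (j₁ : ℂ) - (j₂ : ℂ)
              + (c : ℂ)) c * (-1) ^ c) *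
          (Ring.choose ((-e₁ - 1 : ℤ) : ℂ) (j₁ + (j₂ - c)) * (-1) ^ (j₁ + (j₂ - c)) *
            ((j₁ + (j₂ - c)).choose (j₂ - c) : ℂ) * (-1) ^ (j₂ - c)) := by
      intro c hc
      have hc' : c ≤ j₂ := Nat.lt_succ_iff.mp (Finset.mem_range.mp hc)
      rw [deltaCoeffA, if_pos (by omega), deltaCoeffB, if_pos (by omega),
        genChoose_eq, genChoose_eq]
      have h1 : ((-(-e₀ - 1 - (c : ℤ)) - 1 : ℤ) : ℂ)
          = ((-e₁ - 1 : ℤ) : ℂ) + ((-e₂ - 1 : ℤ) : ℂ) - (j₁ : ℂ) - (j₂ : ℂ) + (c : ℂ) := by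
        have : (-(-e₀ - 1 - (c : ℤ)) - 1 : ℤ)
            = (-e₁ - 1) + (-e₂ - 1) - (j₁ : ℤ) - (j₂ : ℤ) + (c : ℤ) := by omega
        rw [this]; push_cast; ring
      rw [h1]
    rw [Finset.sum_congr rfl hB, key, genChoose_eq, genChoose_eq]
  · rw [hsum, lhsDeltaCoeff, if_neg h]
    symm
    refine Finset.sum_eq_zero fun c hc => ?_
    have hc' : c ≤ j₂ := Nat.lt_succ_iff.mp (Finset.mem_range.mp hc)
    rw [deltaCoeffB, if_neg (by omega), mul_zero]
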